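/- Let μ be an ergodic f-invariant Borel probability measure on a compact metric space, A a Borel set with μ(A) > 0, and ρ > 0. For x ∈ A and n ∈ ℕ let A_{ρ,n} := {x ∈ A : f^m(x) ∈ A for some integer m with n ≤ m ≤ (1+ρ)n}. Then for every 0 < ε < 1 there exists N such that μ(A_{ρ,n}) ≥ (1−ε)μ(A) for every n ≥ N. -/

import Mathlib

open MeasureTheory Filter Topology Function
open scoped ENNReal

set_option maxHeartbeats 1000000

set_option synthInstance.maxHeartbeats 400000 in
/-- For an ergodic measure, a large proportion of points of A return to A with a
return time in the window [n, (1+ρ)n], for every large n. -/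
theorem return_time_window {X : Type*} [MeasurableSpace X]
    (f : X → X) (μ : Measure X) [IsProbabilityMeasure μ]
    (herg : Ergodic f μ)
    (A : Set X) (hA : MeasurableSet A) (hApos : 0 < μ A)
    (ρ : ℝ) (hρ : 0 < ρ) :
    ∀ ε : ℝ, 0 < ε → ε < 1 → ∃ N : ℕ, ∀ n ≥ N,
      ENNReal.ofReal (1 - ε) * μ A ≤
        μ {x ∈ A | ∃ m : ℕ, n ≤ m ∧ (m : ℝ) ≤ (1 + ρ) * n ∧ f^[m] x ∈ A} := by
  intro ε hε hε1
  have hmp : MeasurePreserving f μ μ := herg.toMeasurePreserving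
  have hfm : Measurable f := hmp.measurable
  set g : X → ℝ := A.indicator (fun _ => (1 : ℝ)) with hg_def
  have hgmeas : Measurable g := measurable_const.indicator hA
  have hgLp : MemLp g 2 μ := (memLp_const (1 : ℝ)).indicator hA
  set G : Lp ℝ 2 μ := hgLp.toLp g with hG_def
  -- The Koopman operator on L²
  let Tlin : Lp ℝ 2 μ →ₗ[ℝ] Lp ℝ 2 μ :=
    { toFun := fun h => Lp.compMeasurePreserving f hmp h
      map_add' := fun a b => map_add _ a b
      map_smul' := by
        intro c h
        apply Lp.ext
        have h1 := Lp.coeFn_compMeasurePreserving (c • h) hmp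
        have h2 : (⇑(c • h)) ∘ f =ᵐ[μ] (c • ⇑h) ∘ f :=
          hmp.quasiMeasurePreserving.ae_eq_comp (Lp.coeFn_smul c h)
        have h3 := Lp.coeFn_smul c (Lp.compMeasurePreserving f hmp h)
        have h4 := Lp.coeFn_compMeasurePreserving h hmp
        filter_upwards [h1, h2, h3, h4] with x e1 e2 e3 e4
        simp only [RingHom.id_apply] at *
        rw [e1, e2, e3]
        simp only [Pi.smul_apply, Function.comp_apply, e4, Function.comp] }
  have hTnorm : ∀ h : Lp ℝ 2 μ, ‖Tlin h‖ ≤ 1 * ‖h‖ := fun h => by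
    rw [one_mul]; exact (Lp.norm_compMeasurePreserving h hmp).le
  let T : Lp ℝ 2 μ →L[ℝ] Lp ℝ 2 μ := Tlin.mkContinuous 1 hTnorm
  have hT : ‖T‖ ≤ 1 := Tlin.mkContinuous_norm_le zero_le_one hTnorm
  have hTapp : ∀ h : Lp ℝ 2 μ, ⇑(T h) =ᵐ[μ] ⇑h ∘ f := fun h =>
    Lp.coeFn_compMeasurePreserving h hmp
  -- von Neumann mean ergodic theorem
  obtain ⟨P, hPmem, hlim⟩ : ∃ P : Lp ℝ 2 μ, T P = P ∧
      Tendsto (fun N => birkhoffAverage ℝ T _root_.id N G) atTop (𝓝 P) := by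
    haveI : CompleteSpace (LinearMap.eqLocus (T : Lp ℝ 2 μ →ₗ[ℝ] Lp ℝ 2 μ) 1) := by
      refine IsClosed.completeSpace_coe (hs := ?_)
      have hset : (LinearMap.eqLocus (T : Lp ℝ 2 μ →ₗ[ℝ] Lp ℝ 2 μ) 1 : Set (Lp ℝ 2 μ))
          = {x | T x = x} := rfl
      rw [hset]
      exact isClosed_eq T.continuous continuous_id
    refine ⟨_, ?_, ContinuousLinearMap.tendsto_birkhoffAverage_orthogonalProjection T hT G⟩
    have h5 := (((T : Lp ℝ 2 μ →ₗ[ℝ] Lp ℝ 2 μ).eqLocus ((1 : Lp ℝ 2 μ →L[ℝ] Lp ℝ 2 μ) : Lp ℝ 2 μ →ₗ[ℝ] Lp ℝ 2 μ)).orthogonalProjectionOnto G).2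
    exact LinearMap.mem_eqLocus.mp h5
  -- the limit is a.e. constant
  have hPinv : ⇑P ∘ f =ᵐ[μ] ⇑P := by
    have h1 := hTapp P
    rw [hPmem] at h1
    exact h1.symm
  obtain ⟨c, hc⟩ : ∃ c : ℝ, ⇑P =ᵐ[μ] Function.const X c :=
    herg.quasiErgodic.ae_eq_const_of_ae_eq_comp₀
      (Lp.aestronglyMeasurable P).aemeasurable.nullMeasurable hPinv
  -- pointwise Birkhoff averages
  set φ : ℕ → X → ℝ := fun N x => birkhoffAverage ℝ f g N x with hφ_def
  have hiter : ∀ k : ℕ, ⇑((⇑T)^[k] G) =ᵐ[μ] fun x => g (f^[k] x) := by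
    intro k
    induction k with
    | zero => simpa using hgLp.coeFn_toLp
    | succ k ih =>
      rw [Function.iterate_succ_apply']
      refine (hTapp _).trans ?_
      have h2 : (⇑((⇑T)^[k] G)) ∘ f =ᵐ[μ] (fun x => g (f^[k] x)) ∘ f :=
        hmp.quasiMeasurePreserving.ae_eq_comp ih
      refine h2.trans (Filter.EventuallyEq.of_eq ?_)
      funext x
      simp only [Function.comp_apply, Function.iterate_succ_apply]
  have hsum : ∀ N : ℕ, ⇑(∑ k ∈ Finset.range N, (⇑T)^[k] G) =ᵐ[μ]
      fun x => ∑ k ∈ Finset.range N, g (f^[k] x) := by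
    intro N
    induction N with
    | zero => simpa using (show ⇑(0 : Lp ℝ 2 μ) =ᵐ[μ] fun _ => (0 : ℝ) from Lp.coeFn_zero (E := ℝ) (p := 2) (μ := μ))
    | succ N ih =>
      simp only [Finset.sum_range_succ]
      refine (Lp.coeFn_add _ _).trans ?_
      filter_upwards [ih, hiter N] with x e1 e2
      rw [Pi.add_apply, e1, e2]
  have hXN : ∀ N : ℕ, ⇑(birkhoffAverage ℝ T _root_.id N G) =ᵐ[μ] φ N := by
    intro N
    have hrfl : birkhoffAverage ℝ T _root_.id N G
        = (N : ℝ)⁻¹ • ∑ k ∈ Finset.range N, (⇑T)^[k] G := rfl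
    rw [hrfl]
    refine (Lp.coeFn_smul _ _).trans ?_
    filter_upwards [hsum N] with x hx
    rw [Pi.smul_apply, hx]
    simp only [hφ_def, birkhoffAverage, birkhoffSum]
  -- identify the constant
  have hint_k : ∀ k : ℕ, Integrable (fun x => g (f^[k] x)) μ := by
    intro k
    have hre : (fun x => g (f^[k] x)) = Set.indicator (f^[k] ⁻¹' A) (fun _ => (1 : ℝ)) := by
      funext x
      by_cases h : f^[k] x ∈ A
      · simp [hg_def, Set.indicator_of_mem, h, Set.mem_preimage]
      · simp [hg_def, Set.indicator_of_notMem, h, Set.mem_preimage]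
    rw [hre]
    exact (integrable_const (1 : ℝ)).indicator (hfm.iterate k hA)
  have hInt : ∀ k : ℕ, ∫ x, g (f^[k] x) ∂μ = ∫ x, g x ∂μ := by
    intro k
    have mk := hmp.iterate k
    calc ∫ x, g (f^[k] x) ∂μ = ∫ y, g y ∂(Measure.map f^[k] μ) :=
          (integral_map mk.measurable.aemeasurable
            (by rw [mk.map_eq]; exact hgmeas.aestronglyMeasurable)).symm
      _ = ∫ y, g y ∂μ := by rw [mk.map_eq]
  have hφint : ∀ N : ℕ, 1 ≤ N → ∫ x, φ N x ∂μ = ∫ x, g x ∂μ := by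
    intro N hN
    have hN0 : (N : ℝ) ≠ 0 := by positivity
    have : ∫ x, φ N x ∂μ = (N : ℝ)⁻¹ • ∫ x, birkhoffSum f g N x ∂μ := by
      simp only [hφ_def, birkhoffAverage]
      rw [integral_smul]
    rw [this]
    simp only [birkhoffSum]
    rw [integral_finset_sum _ (fun k _ => hint_k k)]
    simp only [hInt, Finset.sum_const, Finset.card_range, nsmul_eq_mul, smul_eq_mul]
    field_simp
  set one : Lp ℝ 2 μ := (memLp_const (1 : ℝ)).toLp _ with hone_def
  have hIP : (inner ℝ one P) = c := by
    rw [L2.inner_def]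
    have h1 : ⇑one =ᵐ[μ] fun _ => (1 : ℝ) := (memLp_const (1 : ℝ)).coeFn_toLp
    have : ∫ x, (inner ℝ (one x) (P x)) ∂μ = ∫ _x, c ∂μ := by
      refine integral_congr_ae ?_
      filter_upwards [h1, hc] with x e1 e2
      simp [e1, e2, RCLike.inner_apply]
    rw [this]
    simp [measure_univ]
  have hIX : ∀ N : ℕ, 1 ≤ N →
      (inner ℝ one (birkhoffAverage ℝ T _root_.id N G)) = ∫ x, g x ∂μ := by
    intro N hN
    rw [L2.inner_def]
    have h1 : ⇑one =ᵐ[μ] fun _ => (1 : ℝ) := (memLp_const (1 : ℝ)).coeFn_toLp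
    have : ∫ x, (inner ℝ (one x) ((birkhoffAverage ℝ T _root_.id N G : Lp ℝ 2 μ) x)) ∂μ
        = ∫ x, φ N x ∂μ := by
      refine integral_congr_ae ?_
      filter_upwards [h1, hXN N] with x e1 e2
      simp [e1, e2, RCLike.inner_apply]
    rw [this, hφint N hN]
  have hc_eq : c = ∫ x, g x ∂μ := by
    have t1 : Tendsto (fun N => (inner ℝ one (birkhoffAverage ℝ T _root_.id N G)))
        atTop (𝓝 (inner ℝ one P)) :=
      ((continuous_const.inner continuous_id).tendsto P).comp hlim
    have t2 : Tendsto (fun N => (inner ℝ one (birkhoffAverage ℝ T _root_.id N G)))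
        atTop (𝓝 (∫ x, g x ∂μ)) := by
      refine tendsto_const_nhds.congr' ?_
      filter_upwards [eventually_ge_atTop 1] with N hN
      exact (hIX N hN).symm
    have := tendsto_nhds_unique t1 t2
    rw [hIP] at this
    exact this
  have hgInt : ∫ x, g x ∂μ = (μ A).toReal := by
    rw [hg_def, integral_indicator_const (1 : ℝ) hA]
    simp
    rfl
  have hc_pos : 0 < c := by
    rw [hc_eq, hgInt]
    exact ENNReal.toReal_pos hApos.ne' (measure_ne_top μ A)
  -- convergence in measure of the pointwise averages
  have hφmeas : ∀ N, AEStronglyMeasurable (φ N) μ := by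
    intro N
    have hm : Measurable (φ N) := by
      simp only [hφ_def, birkhoffAverage, birkhoffSum, smul_eq_mul]
      exact (Finset.measurable_sum _ fun k _ => hgmeas.comp (hfm.iterate k)).const_mul _
    exact hm.aestronglyMeasurable
  have hTIM : TendstoInMeasure μ φ atTop (fun _ => c) := by
    refine tendstoInMeasure_of_tendsto_eLpNorm_of_ne_top (p := 2) (by norm_num) (by norm_num)
      hφmeas aestronglyMeasurable_const ?_
    have key : ∀ N, eLpNorm (φ N - fun _ => c) 2 μ
        = ENNReal.ofReal ‖birkhoffAverage ℝ T _root_.id N G - P‖ := by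
      intro N
      have he : (φ N - fun _ => c) =ᵐ[μ] ⇑(birkhoffAverage ℝ T _root_.id N G - P) := by
        filter_upwards [hXN N, hc, Lp.coeFn_sub (birkhoffAverage ℝ T _root_.id N G) P]
          with x e1 e2 e3
        simp only [Pi.sub_apply]
        rw [e3, Pi.sub_apply, e1, e2]
        rfl
      rw [eLpNorm_congr_ae he, Lp.norm_def, ENNReal.ofReal_toReal (Lp.eLpNorm_ne_top _)]
    have hnrm : Tendsto (fun N => ‖birkhoffAverage ℝ T _root_.id N G - P‖) atTop (𝓝 0) :=
      tendsto_iff_norm_sub_tendsto_zero.mp hlim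
    have := ENNReal.tendsto_ofReal hnrm
    rw [ENNReal.ofReal_zero] at this
    exact this.congr fun N => (key N).symm
  -- set up the quantitative argument
  set δ : ℝ := ρ * c / (2 * (3 + ρ)) with hδ_def
  have hδ : 0 < δ := by positivity
  set η : ℝ≥0∞ := ENNReal.ofReal ε * μ A / 2 with hη_def
  have hη : 0 < η := by
    refine ENNReal.div_pos ?_ (by norm_num)
    exact mul_ne_zero (ENNReal.ofReal_pos.mpr hε).ne' hApos.ne'
  obtain ⟨N₁, hN₁⟩ := eventually_atTop.mp ((hTIM (ENNReal.ofReal δ) (ENNReal.ofReal_pos.mpr hδ)).eventually_lt_const hη)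
  refine ⟨max N₁ 1, fun n hn => ?_⟩
  have hn1 : 1 ≤ n := le_trans (le_max_right _ _) hn
  have hnN₁ : N₁ ≤ n := le_trans (le_max_left _ _) hn
  have hn0 : (0 : ℝ) < n := by exact_mod_cast hn1
  set M : ℕ := Nat.floor ((1 + ρ) * n) + 1 with hM_def
  have hnM : n < M := by
    refine Nat.lt_succ_of_le (Nat.le_floor ?_)
    nlinarith
  have hMlt : (1 + ρ) * n < (M : ℝ) := by
    have := Nat.lt_floor_add_one ((1 + ρ) * n)
    push_cast [hM_def]
    linarith
  have hMle : (M : ℝ) ≤ (1 + ρ) * n + 1 := by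
    have := Nat.floor_le (show (0 : ℝ) ≤ (1 + ρ) * n by positivity)
    push_cast [hM_def]
    linarith
  -- inclusion into good set and two bad sets
  have hsub : A ⊆ {x ∈ A | ∃ m : ℕ, n ≤ m ∧ (m : ℝ) ≤ (1 + ρ) * n ∧ f^[m] x ∈ A}
      ∪ ({x | δ ≤ dist (φ n x) c} ∪ {x | δ ≤ dist (φ M x) c}) := by
    intro x hx
    by_cases hgood : ∃ m : ℕ, n ≤ m ∧ (m : ℝ) ≤ (1 + ρ) * n ∧ f^[m] x ∈ A
    · exact Set.mem_union_left _ ⟨hx, hgood⟩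
    · right
      by_contra hcon
      simp only [Set.mem_union, Set.mem_setOf_eq, not_or, not_le] at hcon
      obtain ⟨hd1, hd2⟩ := hcon
      push_neg at hgood
      -- sums of indicators
      set S : ℕ → ℝ := fun N => ∑ k ∈ Finset.range N, g (f^[k] x) with hS_def
      have hS_eq : S M = S n := by
        have hsub2 : S M - S n = ∑ k ∈ Finset.Ico n M, g (f^[k] x) := by
          rw [hS_def]
          rw [Finset.sum_Ico_eq_sub _ hnM.le]
        have hzero : ∀ k ∈ Finset.Ico n M, g (f^[k] x) = 0 := by
          intro k hk
          obtain ⟨hk1, hk2⟩ := Finset.mem_Ico.mp hk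
          have hkle : (k : ℝ) ≤ (1 + ρ) * n := by
            have h5 : k ≤ Nat.floor ((1 + ρ) * n) := Nat.lt_succ_iff.mp hk2
            calc (k : ℝ) ≤ (Nat.floor ((1 + ρ) * n) : ℝ) := by exact_mod_cast h5
              _ ≤ (1 + ρ) * n := Nat.floor_le (by positivity)
          have := hgood k hk1 hkle
          simp [hg_def, Set.indicator_of_notMem this]
        rw [Finset.sum_eq_zero hzero] at hsub2
        linarith
      have hφS : ∀ N : ℕ, φ N x = (N : ℝ)⁻¹ * S N := by
        intro N
        simp [hφ_def, birkhoffAverage, birkhoffSum, hS_def, smul_eq_mul]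
      have hM0 : (0 : ℝ) < M := by
        have : (0 : ℕ) < M := Nat.lt_of_lt_of_le (Nat.pos_of_ne_zero (by omega)) le_rfl
        exact_mod_cast this
      have habs1 : |φ n x - c| < δ := by rwa [Real.dist_eq] at hd1
      have habs2 : |φ M x - c| < δ := by rwa [Real.dist_eq] at hd2
      have h1 : S n < n * (c + δ) := by
        have hlt : φ n x < c + δ := by
          have := (abs_lt.mp habs1).2
          linarith
        have : S n = n * φ n x := by
          rw [hφS n]
          field_simp
        rw [this]
        nlinarith
      have h2 : (M : ℝ) * (c - δ) < S M := by
        have hlt : c - δ < φ M x := by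
          have := (abs_lt.mp habs2).1
          linarith
        have : S M = M * φ M x := by
          rw [hφS M]
          field_simp
        rw [this]
        nlinarith
      have hδval : 2 * (3 + ρ) * δ = ρ * c := by
        rw [hδ_def]
        field_simp
      have hn1' : (1 : ℝ) ≤ n := by exact_mod_cast hn1
      have h3ρ : (3 + ρ) ≠ 0 := by positivity
      have e1 : ((1 + ρ) * n) * c < (M : ℝ) * c := mul_lt_mul_of_pos_right hMlt hc_pos
      have key1 : (M : ℝ) * c - n * c < M * δ + n * δ := by nlinarith [h1, h2, hS_eq]
      have key2 : ρ * n * c < (M : ℝ) * c - n * c := by nlinarith [e1]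
      have key3 : (M : ℝ) * δ + n * δ ≤ ((3 + ρ) * n) * δ := by
        have h6 : ((M : ℝ) + n) * δ ≤ ((3 + ρ) * n) * δ :=
          mul_le_mul_of_nonneg_right (by linarith) hδ.le
        nlinarith [h6]
      have key4 : ((3 + ρ) * n) * δ = ρ * c * n / 2 := by
        rw [hδ_def]
        field_simp
      have key5 : (0 : ℝ) < ρ * n * c := by positivity
      linarith [key1, key2, key3, key4, key5]
  -- measure estimates
  have hμ1 : μ {x | δ ≤ dist (φ n x) c} < η := by
    simpa only [edist_dist, ENNReal.ofReal_le_ofReal_iff dist_nonneg] using hN₁ n hnN₁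
  have hμ2 : μ {x | δ ≤ dist (φ M x) c} < η := by
    simpa only [edist_dist, ENNReal.ofReal_le_ofReal_iff dist_nonneg] using hN₁ M (le_trans hnN₁ hnM.le)
  have hA_le : μ A ≤ μ {x ∈ A | ∃ m : ℕ, n ≤ m ∧ (m : ℝ) ≤ (1 + ρ) * n ∧ f^[m] x ∈ A}
      + ENNReal.ofReal ε * μ A := by
    calc μ A ≤ μ ({x ∈ A | ∃ m : ℕ, n ≤ m ∧ (m : ℝ) ≤ (1 + ρ) * n ∧ f^[m] x ∈ A}
          ∪ ({x | δ ≤ dist (φ n x) c} ∪ {x | δ ≤ dist (φ M x) c})) := measure_mono hsub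
      _ ≤ μ {x ∈ A | ∃ m : ℕ, n ≤ m ∧ (m : ℝ) ≤ (1 + ρ) * n ∧ f^[m] x ∈ A}
          + μ ({x | δ ≤ dist (φ n x) c} ∪ {x | δ ≤ dist (φ M x) c}) := measure_union_le _ _
      _ ≤ μ {x ∈ A | ∃ m : ℕ, n ≤ m ∧ (m : ℝ) ≤ (1 + ρ) * n ∧ f^[m] x ∈ A}
          + (μ {x | δ ≤ dist (φ n x) c} + μ {x | δ ≤ dist (φ M x) c}) :=
        add_le_add le_rfl (measure_union_le _ _)
      _ ≤ μ {x ∈ A | ∃ m : ℕ, n ≤ m ∧ (m : ℝ) ≤ (1 + ρ) * n ∧ f^[m] x ∈ A} + (η + η) :=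
        add_le_add le_rfl (add_le_add hμ1.le hμ2.le)
      _ = μ {x ∈ A | ∃ m : ℕ, n ≤ m ∧ (m : ℝ) ≤ (1 + ρ) * n ∧ f^[m] x ∈ A}
          + ENNReal.ofReal ε * μ A := by rw [hη_def, ENNReal.add_halves]
  have hsplit : ENNReal.ofReal (1 - ε) * μ A + ENNReal.ofReal ε * μ A = μ A := by
    rw [← add_mul, ← ENNReal.ofReal_add (by linarith) hε.le]
    norm_num
  rw [← ENNReal.add_le_add_iff_right
    (ENNReal.mul_ne_top ENNReal.ofReal_ne_top (measure_ne_top μ A)), hsplit]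
  exact hA_le
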